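/- Let D be a finite digraph and let G be the 2-edge-colored graph obtained by replacing every vertex v of D by two vertices v', v'' joined by a red edge, and adding, for every arc uv of D, a blue edge u''v'. Then G is bipartite, and for every T ⊆ V(D), the digraph D − T has no directed cycle if and only if G − T' is PC acyclic of type 5, where T' = {v' : v ∈ T}. -/

import Mathlib

open SimpleGraph

variable {V : Type*} {c : ℕ}

/-- The list of colors of the edges of a walk, in order. -/
def colorList (G : SimpleGraph V) (col : V → V → Fin c) {u v : V} (w : G.Walk u v) :
    List (Fin c) :=
  w.darts.map fun d => col d.toProd.1 d.toProd.2

/-- A walk is properly colored (as an open walk): consecutive edges have different colors. -/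
def IsPCOpen (G : SimpleGraph V) (col : V → V → Fin c) {u v : V} (w : G.Walk u v) : Prop :=
  (colorList G col w).Chain' (· ≠ ·)

/-- A closed walk is properly colored: consecutive edges have different colors,
including the last versus the first edge. -/
def IsPCClosed (G : SimpleGraph V) (col : V → V → Fin c) {u : V} (w : G.Walk u u) : Prop :=
  (colorList G col w ++ (colorList G col w).take 1).Chain' (· ≠ ·)

/-- `G` (with coloring `col`) has a properly colored cycle. -/
def HasPCCycle (G : SimpleGraph V) (col : V → V → Fin c) : Prop :=
  ∃ (u : V) (w : G.Walk u u), w.IsCycle ∧ IsPCClosed G col w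

/-- `G` (with coloring `col`) has a properly colored closed trail. -/
def HasPCClosedTrail (G : SimpleGraph V) (col : V → V → Fin c) : Prop :=
  ∃ (u : V) (w : G.Walk u u), w.IsCircuit ∧ IsPCClosed G col w

/-- `G` (with coloring `col`) has a properly colored closed walk. -/
def HasPCClosedWalk (G : SimpleGraph V) (col : V → V → Fin c) : Prop :=
  ∃ (u : V) (w : G.Walk u u), 0 < w.length ∧ IsPCClosed G col w

/-- A vertex all of whose incident edges have the same color. -/
def MonoVertex (G : SimpleGraph V) (col : V → V → Fin c) (z : V) : Prop :=
  ∀ v w, G.Adj z v → G.Adj z w → col z v = col z w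

/-- An ordering (given by an injective ranking `r`) is of type 1 if every vertex sends
edges of only one color into each connected component of the subgraph induced by the
later vertices. -/
def Ordering1 (G : SimpleGraph V) (col : V → V → Fin c) (r : V → ℕ) : Prop :=
  ∀ (u v w : V) (hv : G.Adj u v) (hw : G.Adj u w) (hrv : r u < r v) (hrw : r u < r w),
    (G.induce {x | r u < r x}).Reachable ⟨v, hrv⟩ ⟨w, hrw⟩ → col u v = col u w

/-- Type 2: all edges from a vertex to later vertices which are not bridges in the
subgraph induced by the vertex together with the later vertices have the same color. -/
def Ordering2 (G : SimpleGraph V) (col : V → V → Fin c) (r : V → ℕ) : Prop :=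
  ∀ (u v w : V) (hv : G.Adj u v) (hw : G.Adj u w) (hrv : r u < r v) (hrw : r u < r w),
    ¬ (G.induce {x | r u ≤ r x}).IsBridge s(⟨u, le_refl (r u)⟩, ⟨v, hrv.le⟩) →
    ¬ (G.induce {x | r u ≤ r x}).IsBridge s(⟨u, le_refl (r u)⟩, ⟨w, hrw.le⟩) →
    col u v = col u w

/-- Type 3: all edges from a vertex to later vertices have the same color. -/
def Ordering3 (G : SimpleGraph V) (col : V → V → Fin c) (r : V → ℕ) : Prop :=
  ∀ u v w : V, G.Adj u v → G.Adj u w → r u < r v → r u < r w → col u v = col u w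

/-- Type 4: all edges to later vertices have the same color and all edges to earlier
vertices have the same color. -/
def Ordering4 (G : SimpleGraph V) (col : V → V → Fin c) (r : V → ℕ) : Prop :=
  Ordering3 G col r ∧
    ∀ u v w : V, G.Adj u v → G.Adj u w → r v < r u → r w < r u → col u v = col u w

/-- Type 5: type 4, and additionally the color towards earlier vertices differs from the
color towards later vertices. -/
def Ordering5 (G : SimpleGraph V) (col : V → V → Fin c) (r : V → ℕ) : Prop :=
  Ordering4 G col r ∧
    ∀ u v w : V, G.Adj u v → G.Adj u w → r v < r u → r u < r w → col u v ≠ col u w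

def PCAcyclic1 (G : SimpleGraph V) (col : V → V → Fin c) : Prop :=
  ∃ r : V → ℕ, Function.Injective r ∧ Ordering1 G col r

def PCAcyclic2 (G : SimpleGraph V) (col : V → V → Fin c) : Prop :=
  ∃ r : V → ℕ, Function.Injective r ∧ Ordering2 G col r

def PCAcyclic3 (G : SimpleGraph V) (col : V → V → Fin c) : Prop :=
  ∃ r : V → ℕ, Function.Injective r ∧ Ordering3 G col r

def PCAcyclic4 (G : SimpleGraph V) (col : V → V → Fin c) : Prop :=
  ∃ r : V → ℕ, Function.Injective r ∧ Ordering4 G col r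

def PCAcyclic5 (G : SimpleGraph V) (col : V → V → Fin c) : Prop :=
  ∃ r : V → ℕ, Function.Injective r ∧ Ordering5 G col r

/-- The number of `C`-monochromatic vertices of a closed walk `C`: vertices whose two
incident edges on `C` (cyclically) have the same color. -/
def monoCount (G : SimpleGraph V) (col : V → V → Fin c) {u : V} (w : G.Walk u u) : ℕ :=
  ((colorList G col w ++ (colorList G col w).take 1).zip
      (colorList G col w ++ (colorList G col w).take 1).tail).countP
    fun p => decide (p.1 = p.2)

/-- The number of vertices of a closed walk `C` that are not `C`-monochromatic. -/
def nonMonoCount (G : SimpleGraph V) (col : V → V → Fin c) {u : V} (w : G.Walk u u) : ℕ :=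
  ((colorList G col w ++ (colorList G col w).take 1).zip
      (colorList G col w ++ (colorList G col w).take 1).tail).countP
    fun p => decide (p.1 ≠ p.2)

/-- The 2-edge-colored graph obtained from a digraph `D` by the standard transformation:
every vertex `v` becomes `v' = Sum.inl v` and `v'' = Sum.inr v` joined by a red edge,
and every arc `uv` of `D` becomes a blue edge `u''v'`. -/
def DTGraph {U : Type*} (D : U → U → Prop) : SimpleGraph (U ⊕ U) :=
  SimpleGraph.fromRel fun a b =>
    (∃ v : U, a = Sum.inl v ∧ b = Sum.inr v) ∨
    (∃ u v : U, D u v ∧ a = Sum.inr u ∧ b = Sum.inl v)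

/-- Red is color `0` (edges `v'v''`), blue is color `1` (edges `u''v'` for arcs `uv`). -/
def col19 {U : Type*} [DecidableEq U] : (U ⊕ U) → (U ⊕ U) → Fin 2 := fun a b =>
  match a, b with
  | Sum.inl x, Sum.inr y => if x = y then 0 else 1
  | Sum.inr x, Sum.inl y => if x = y then 0 else 1
  | _, _ => 0

lemma dtgraph_adj_cases {U : Type*} {D : U → U → Prop} {a b : U ⊕ U}
    (h : (DTGraph D).Adj a b) :
    (∃ v, a = Sum.inl v ∧ b = Sum.inr v) ∨
    (∃ v, a = Sum.inr v ∧ b = Sum.inl v) ∨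
    (∃ u v, D u v ∧ a = Sum.inr u ∧ b = Sum.inl v) ∨
    (∃ u v, D u v ∧ a = Sum.inl v ∧ b = Sum.inr u) := by
  rw [DTGraph, SimpleGraph.fromRel_adj] at h
  obtain ⟨-, h | h⟩ := h
  · rcases h with ⟨v, hv⟩ | ⟨u, v, h⟩
    · exact Or.inl ⟨v, hv⟩
    · exact Or.inr (Or.inr (Or.inl ⟨u, v, h⟩))
  · rcases h with ⟨v, hv⟩ | ⟨u, v, h⟩
    · exact Or.inr (Or.inl ⟨v, hv.2, hv.1⟩)
    · exact Or.inr (Or.inr (Or.inr ⟨u, v, h.1, h.2.2, h.2.1⟩))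

lemma dtgraph_adj_lr {U : Type*} {D : U → U → Prop} (v : U) :
    (DTGraph D).Adj (Sum.inl v) (Sum.inr v) := by
  rw [DTGraph, SimpleGraph.fromRel_adj]
  exact ⟨by simp, Or.inl (Or.inl ⟨v, rfl, rfl⟩)⟩

lemma dtgraph_adj_arc {U : Type*} {D : U → U → Prop} {u v : U} (h : D u v) :
    (DTGraph D).Adj (Sum.inr u) (Sum.inl v) := by
  rw [DTGraph, SimpleGraph.fromRel_adj]
  exact ⟨by simp, Or.inl (Or.inr ⟨u, v, h, rfl, rfl⟩)⟩

lemma notmem_inr19 {U : Type*} (T : Set U) (v : U) :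
    (Sum.inr v : U ⊕ U) ∉ Sum.inl '' T := by
  rintro ⟨x, -, h⟩; exact Sum.inl_ne_inr h

lemma notmem_inl19 {U : Type*} {T : Set U} {v : U} (h : v ∉ T) :
    (Sum.inl v : U ⊕ U) ∉ Sum.inl '' T := by
  rintro ⟨x, hx, hh⟩
  obtain rfl : x = v := Sum.inl.inj hh
  exact h hx

open Classical in
noncomputable def fvsF {U : Type*} [Fintype U] (R : U → U → Prop) (v : U) : ℕ :=
  (Finset.univ.filter (fun x => Relation.TransGen R x v)).card

open Classical in
noncomputable def fvsG {U : Type*} [Fintype U] (R : U → U → Prop) (v : U) : ℕ :=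
  Fintype.card U * fvsF R v + ((Fintype.equivFin U) v : ℕ)

open Classical in
noncomputable def fvsS {U : Type*} [Fintype U] (R : U → U → Prop) (T : Set U) :
    U ⊕ U → ℕ
  | Sum.inl v => Fintype.card U + 2 * fvsG R v
  | Sum.inr v => if v ∈ T then ((Fintype.equivFin U) v : ℕ)
      else Fintype.card U + 2 * fvsG R v + 1

lemma fvsF_lt {U : Type*} [Fintype U] {R : U → U → Prop} {u v : U}
    (hu : ¬ Relation.TransGen R u u) (huv : Relation.TransGen R u v) :
    fvsF R u < fvsF R v := by
  classical
  unfold fvsF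
  apply Finset.card_lt_card
  rw [Finset.ssubset_iff_of_subset]
  · refine ⟨u, ?_, ?_⟩
    · simpa only [Finset.mem_filter, Finset.mem_univ, true_and] using huv
    · simpa only [Finset.mem_filter, Finset.mem_univ, true_and] using hu
  · intro x hx
    simp only [Finset.mem_filter, Finset.mem_univ, true_and] at hx ⊢
    exact hx.trans huv

lemma fvsG_lt {U : Type*} [Fintype U] {R : U → U → Prop} {u v : U}
    (hu : ¬ Relation.TransGen R u u) (huv : Relation.TransGen R u v) :
    fvsG R u < fvsG R v := by
  have hN : 0 < Fintype.card U := Fintype.card_pos_iff.mpr ⟨u⟩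
  have hf := fvsF_lt hu huv
  have hiu : ((Fintype.equivFin U) u : ℕ) < Fintype.card U := ((Fintype.equivFin U) u).isLt
  unfold fvsG
  calc Fintype.card U * fvsF R u + ((Fintype.equivFin U) u : ℕ)
      < Fintype.card U * (fvsF R u + 1) := by rw [Nat.mul_add, Nat.mul_one]; omega
    _ ≤ Fintype.card U * fvsF R v := Nat.mul_le_mul_left _ hf
    _ ≤ _ := Nat.le_add_right _ _

lemma fvsG_inj {U : Type*} [Fintype U] (R : U → U → Prop) :
    Function.Injective (fvsG R) := by
  intro u v h
  have hN : 0 < Fintype.card U := Fintype.card_pos_iff.mpr ⟨u⟩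
  have hiu : ((Fintype.equivFin U) u : ℕ) < Fintype.card U := ((Fintype.equivFin U) u).isLt
  have hiv : ((Fintype.equivFin U) v : ℕ) < Fintype.card U := ((Fintype.equivFin U) v).isLt
  unfold fvsG at h
  have hmod := congrArg (· % Fintype.card U) h
  simp only [Nat.mul_add_mod] at hmod
  rw [Nat.mod_eq_of_lt hiu, Nat.mod_eq_of_lt hiv] at hmod
  exact (Fintype.equivFin U).injective (Fin.ext hmod)

lemma fvsS_inj {U : Type*} [Fintype U] (R : U → U → Prop) (T : Set U) :
    Function.Injective (fvsS R T) := by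
  classical
  intro a b h
  rcases a with x | x <;> rcases b with y | y
  · simp only [fvsS] at h
    have : fvsG R x = fvsG R y := by omega
    rw [fvsG_inj R this]
  · have hiy : ((Fintype.equivFin U) y : ℕ) < Fintype.card U := ((Fintype.equivFin U) y).isLt
    simp only [fvsS] at h
    split_ifs at h with hy
    · omega
    · omega
  · have hix : ((Fintype.equivFin U) x : ℕ) < Fintype.card U := ((Fintype.equivFin U) x).isLt
    simp only [fvsS] at h
    split_ifs at h with hx
    · omega
    · omega
  · simp only [fvsS] at h
    split_ifs at h with hx hy hy
    · exact congrArg Sum.inr ((Fintype.equivFin U).injective (Fin.ext h))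
    · have hix : ((Fintype.equivFin U) x : ℕ) < Fintype.card U := ((Fintype.equivFin U) x).isLt
      omega
    · have hiy : ((Fintype.equivFin U) y : ℕ) < Fintype.card U := ((Fintype.equivFin U) y).isLt
      omega
    · have : fvsG R x = fvsG R y := by omega
      rw [fvsG_inj R this]

/-- Classification of "upward" edges for the rank `fvsS`. -/
lemma fvsS_up {U : Type*} [Fintype U] [DecidableEq U] {D : U → U → Prop}
    (hD : ∀ v : U, ¬ D v v) {T : Set U}
    (hA : ∀ v : U, ¬ Relation.TransGen (fun a b => D a b ∧ a ∉ T ∧ b ∉ T) v v)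
    {a b : U ⊕ U} (ha : a ∉ Sum.inl '' T) (hb : b ∉ Sum.inl '' T)
    (hadj : (DTGraph D).Adj a b)
    (hlt : fvsS (fun a b => D a b ∧ a ∉ T ∧ b ∉ T) T a
         < fvsS (fun a b => D a b ∧ a ∉ T ∧ b ∉ T) T b) :
    (∃ x, a = Sum.inl x ∧ b = Sum.inr x) ∨
    (∃ x y, a = Sum.inr x ∧ b = Sum.inl y ∧ x ≠ y) := by
  classical
  set R : U → U → Prop := fun a b => D a b ∧ a ∉ T ∧ b ∉ T with hRdef
  rcases dtgraph_adj_cases hadj with ⟨v, rfl, rfl⟩ | ⟨v, rfl, rfl⟩ |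
    ⟨u, v, huv, rfl, rfl⟩ | ⟨u, v, huv, rfl, rfl⟩
  · exact Or.inl ⟨v, rfl, rfl⟩
  · exfalso
    have hvT : v ∉ T := fun hv => hb ⟨v, hv, rfl⟩
    simp only [fvsS, if_neg hvT] at hlt
    omega
  · refine Or.inr ⟨u, v, rfl, rfl, fun h => hD v (h ▸ huv)⟩
  · exfalso
    have hvT : v ∉ T := fun hv => ha ⟨v, hv, rfl⟩
    by_cases huT : u ∈ T
    · have hiu : ((Fintype.equivFin U) u : ℕ) < Fintype.card U := ((Fintype.equivFin U) u).isLt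
      simp only [fvsS, if_pos huT] at hlt
      omega
    · have hg : fvsG R u < fvsG R v :=
        fvsG_lt (hA u) (Relation.TransGen.single ⟨huv, huT, hvT⟩)
      simp only [fvsS, if_neg huT] at hlt
      omega

/-- The graph `DTGraph D` is bipartite, and for every `T ⊆ V(D)`,
the digraph `D − T` has no directed cycle if and only if `DTGraph D − T'` is PC acyclic
of type 5, where `T' = {v' : v ∈ T}`. -/
theorem feedback_vertex_set_reduction {U : Type*} [Fintype U] [DecidableEq U]
    (D : U → U → Prop) (hD : ∀ v : U, ¬ D v v) :
    (DTGraph D).Colorable 2 ∧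
      ∀ T : Set U,
        ((∀ v : U, ¬ Relation.TransGen (fun a b => D a b ∧ a ∉ T ∧ b ∉ T) v v) ↔
          PCAcyclic5 ((DTGraph D).induce {a | a ∉ Sum.inl '' T})
            (fun a b => col19 a.1 b.1)) := by
  constructor
  · exact ⟨SimpleGraph.Coloring.mk (Sum.elim (fun _ => 0) (fun _ => 1))
      (fun {a b} h => by
        rcases dtgraph_adj_cases h with ⟨v, rfl, rfl⟩ | ⟨v, rfl, rfl⟩ |
          ⟨u, v, _, rfl, rfl⟩ | ⟨u, v, _, rfl, rfl⟩ <;> simp)⟩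
  · intro T
    constructor
    · -- forward direction
      intro hA
      classical
      refine ⟨fun a => fvsS (fun a b => D a b ∧ a ∉ T ∧ b ∉ T) T a.1,
        fun a b h => Subtype.ext (fvsS_inj _ T h), ⟨⟨?_, ?_⟩, ?_⟩⟩
      · -- Ordering3
        intro u v w hv hw hrv hrw
        rcases fvsS_up hD hA u.2 v.2 hv hrv with ⟨x, hx1, hx2⟩ | ⟨x, y, hx1, hx2, hxy⟩ <;>
          rcases fvsS_up hD hA u.2 w.2 hw hrw with ⟨x', hx1', hx2'⟩ | ⟨x', y', hx1', hx2', hxy'⟩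
        · obtain rfl : x = x' := Sum.inl.inj (hx1 ▸ hx1')
          show col19 u.1 v.1 = col19 u.1 w.1
          rw [hx1, hx2, hx2']
        · exact absurd (hx1 ▸ hx1') (by simp)
        · exact absurd (hx1 ▸ hx1') (by simp)
        · obtain rfl : x = x' := Sum.inr.inj (hx1 ▸ hx1')
          show col19 u.1 v.1 = col19 u.1 w.1
          rw [hx1, hx2, hx2']
          simp only [col19, if_neg hxy, if_neg hxy']
      · -- Ordering4.2
        intro u v w hv hw hrv hrw
        rcases fvsS_up hD hA v.2 u.2 hv.symm hrv with ⟨x, hx1, hx2⟩ | ⟨x, y, hx1, hx2, hxy⟩ <;>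
          rcases fvsS_up hD hA w.2 u.2 hw.symm hrw with ⟨x', hx1', hx2'⟩ | ⟨x', y', hx1', hx2', hxy'⟩
        · obtain rfl : x = x' := Sum.inr.inj (hx2 ▸ hx2')
          show col19 u.1 v.1 = col19 u.1 w.1
          rw [hx1, hx2, hx1']
        · exact absurd (hx2 ▸ hx2') (by simp)
        · exact absurd (hx2 ▸ hx2') (by simp)
        · obtain rfl : y = y' := Sum.inl.inj (hx2 ▸ hx2')
          show col19 u.1 v.1 = col19 u.1 w.1
          rw [hx1, hx2, hx1']
          simp only [col19, if_neg (Ne.symm hxy), if_neg (Ne.symm hxy')]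
      · -- Ordering5.2
        intro u v w hv hw hrv hrw
        rcases fvsS_up hD hA v.2 u.2 hv.symm hrv with ⟨x, hx1, hx2⟩ | ⟨x, y, hx1, hx2, hxy⟩ <;>
          rcases fvsS_up hD hA u.2 w.2 hw hrw with ⟨x', hx1', hx2'⟩ | ⟨x', y', hx1', hx2', hxy'⟩
        · exact absurd (hx2 ▸ hx1') (by simp)
        · obtain rfl : x = x' := Sum.inr.inj (hx2 ▸ hx1')
          show col19 u.1 v.1 ≠ col19 u.1 w.1
          rw [hx1, hx2, hx2']
          simp only [col19, if_pos rfl, if_neg hxy']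
          decide
        · obtain rfl : y = x' := Sum.inl.inj (hx2 ▸ hx1')
          show col19 u.1 v.1 ≠ col19 u.1 w.1
          rw [hx1, hx2, hx2']
          simp only [col19, if_neg (Ne.symm hxy), if_pos rfl]
          decide
        · exact absurd (hx2 ▸ hx1') (by simp)
    · -- reverse direction
      rintro ⟨r, hinj, ⟨⟨h3, h4⟩, h5⟩⟩ v hcyc
      classical
      have hSr : ∀ x : U, Sum.inr x ∈ {a : U ⊕ U | a ∉ Sum.inl '' T} :=
        fun x => notmem_inr19 T x
      have hSl : ∀ {x : U}, x ∉ T → Sum.inl x ∈ {a : U ⊕ U | a ∉ Sum.inl '' T} :=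
        fun hx => notmem_inl19 hx
      let r' : U ⊕ U → ℕ :=
        fun a => if h : a ∈ {a : U ⊕ U | a ∉ Sum.inl '' T} then r ⟨a, h⟩ else 0
      have hr' : ∀ (a : U ⊕ U) (h : a ∈ {a : U ⊕ U | a ∉ Sum.inl '' T}),
          r' a = r ⟨a, h⟩ := fun a h => dif_pos h
      have hr'inj : ∀ (a b : U ⊕ U) (ha : a ∈ {a : U ⊕ U | a ∉ Sum.inl '' T})
          (hb : b ∈ {a : U ⊕ U | a ∉ Sum.inl '' T}), r' a = r' b → a = b := by
        intro a b ha hb h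
        rw [hr' a ha, hr' b hb] at h
        exact congrArg Subtype.val (hinj h)
      have key : ∀ a b : U, D a b → a ∉ T → b ∉ T →
          (r' (Sum.inl a) < r' (Sum.inr a) →
            r' (Sum.inl b) < r' (Sum.inr b) ∧ r' (Sum.inr a) < r' (Sum.inr b)) ∧
          (r' (Sum.inr a) < r' (Sum.inl a) →
            r' (Sum.inr b) < r' (Sum.inl b) ∧ r' (Sum.inr b) < r' (Sum.inr a)) := by
        intro a b hab haT hbT
        have hne : a ≠ b := fun h => hD a (h ▸ hab)
        have mA1 : Sum.inl a ∈ {a : U ⊕ U | a ∉ Sum.inl '' T} := hSl haT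
        have mA2 : Sum.inr a ∈ {a : U ⊕ U | a ∉ Sum.inl '' T} := hSr a
        have mB1 : Sum.inl b ∈ {a : U ⊕ U | a ∉ Sum.inl '' T} := hSl hbT
        have mB2 : Sum.inr b ∈ {a : U ⊕ U | a ∉ Sum.inl '' T} := hSr b
        have hadj_aa : ((DTGraph D).induce {a : U ⊕ U | a ∉ Sum.inl '' T}).Adj ⟨Sum.inr a, mA2⟩ ⟨Sum.inl a, mA1⟩ :=
          (dtgraph_adj_lr a).symm
        have hadj_ab : ((DTGraph D).induce {a : U ⊕ U | a ∉ Sum.inl '' T}).Adj ⟨Sum.inr a, mA2⟩ ⟨Sum.inl b, mB1⟩ :=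
          dtgraph_adj_arc hab
        have hadj_bb : ((DTGraph D).induce {a : U ⊕ U | a ∉ Sum.inl '' T}).Adj ⟨Sum.inl b, mB1⟩ ⟨Sum.inr b, mB2⟩ :=
          dtgraph_adj_lr b
        rw [hr' _ mA1, hr' _ mA2, hr' _ mB1, hr' _ mB2]
        constructor
        · intro h1
          have step1 : r ⟨Sum.inr a, mA2⟩ < r ⟨Sum.inl b, mB1⟩ := by
            rcases lt_trichotomy (r ⟨Sum.inl b, mB1⟩) (r ⟨Sum.inr a, mA2⟩) with h | h | h
            · have hcol : col19 (Sum.inr a) (Sum.inl a) = col19 (Sum.inr a) (Sum.inl b) :=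
                h4 _ _ _ hadj_aa hadj_ab h1 h
              simp only [col19, if_pos rfl, if_neg hne] at hcol
              exact absurd hcol (by decide)
            · exact absurd (congrArg Subtype.val (hinj h)) (by simp)
            · exact h
          have step2 : r ⟨Sum.inl b, mB1⟩ < r ⟨Sum.inr b, mB2⟩ := by
            rcases lt_trichotomy (r ⟨Sum.inl b, mB1⟩) (r ⟨Sum.inr b, mB2⟩) with h | h | h
            · exact h
            · exact absurd (congrArg Subtype.val (hinj h)) (by simp)
            · have hcol : col19 (Sum.inl b) (Sum.inr b) = col19 (Sum.inl b) (Sum.inr a) :=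
                h4 _ _ _ hadj_bb hadj_ab.symm h step1
              simp only [col19, if_pos rfl, if_neg (Ne.symm hne)] at hcol
              exact absurd hcol (by decide)
          exact ⟨step2, lt_trans step1 step2⟩
        · intro h1
          have step1 : r ⟨Sum.inl b, mB1⟩ < r ⟨Sum.inr a, mA2⟩ := by
            rcases lt_trichotomy (r ⟨Sum.inl b, mB1⟩) (r ⟨Sum.inr a, mA2⟩) with h | h | h
            · exact h
            · exact absurd (congrArg Subtype.val (hinj h)) (by simp)
            · have hcol : col19 (Sum.inr a) (Sum.inl a) = col19 (Sum.inr a) (Sum.inl b) :=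
                h3 _ _ _ hadj_aa hadj_ab h1 h
              simp only [col19, if_pos rfl, if_neg hne] at hcol
              exact absurd hcol (by decide)
          have step2 : r ⟨Sum.inr b, mB2⟩ < r ⟨Sum.inl b, mB1⟩ := by
            rcases lt_trichotomy (r ⟨Sum.inr b, mB2⟩) (r ⟨Sum.inl b, mB1⟩) with h | h | h
            · exact h
            · exact absurd (congrArg Subtype.val (hinj h)) (by simp)
            · have hcol : col19 (Sum.inl b) (Sum.inr b) = col19 (Sum.inl b) (Sum.inr a) :=
                h3 _ _ _ hadj_bb hadj_ab.symm h step1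
              simp only [col19, if_pos rfl, if_neg (Ne.symm hne)] at hcol
              exact absurd hcol (by decide)
          exact ⟨step2, lt_trans step2 step1⟩
      have hvT : v ∉ T := by
        cases hcyc with
        | single h => exact h.2.1
        | tail _ h => exact h.2.2
      have main : ∀ b : U, Relation.TransGen (fun a b => D a b ∧ a ∉ T ∧ b ∉ T) v b →
          b ∉ T ∧
          (r' (Sum.inl v) < r' (Sum.inr v) →
            r' (Sum.inl b) < r' (Sum.inr b) ∧ r' (Sum.inr v) < r' (Sum.inr b)) ∧
          (r' (Sum.inr v) < r' (Sum.inl v) →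
            r' (Sum.inr b) < r' (Sum.inl b) ∧ r' (Sum.inr b) < r' (Sum.inr v)) := by
        intro b hb
        induction hb with
        | single h => exact ⟨h.2.2, key v _ h.1 h.2.1 h.2.2⟩
        | tail hvc hcb ih =>
          obtain ⟨hcT, ih1, ih2⟩ := ih
          have k := key _ _ hcb.1 hcb.2.1 hcb.2.2
          refine ⟨hcb.2.2, fun h => ?_, fun h => ?_⟩
          · obtain ⟨hc, hlt⟩ := ih1 h
            obtain ⟨hb', hlt'⟩ := k.1 hc
            exact ⟨hb', lt_trans hlt hlt'⟩
          · obtain ⟨hc, hlt⟩ := ih2 h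
            obtain ⟨hb', hlt'⟩ := k.2 hc
            exact ⟨hb', lt_trans hlt' hlt⟩
      obtain ⟨-, m1, m2⟩ := main v hcyc
      rcases lt_trichotomy (r' (Sum.inl v)) (r' (Sum.inr v)) with h | h | h
      · exact absurd (m1 h).2 (lt_irrefl _)
      · exact absurd (hr'inj _ _ (hSl hvT) (hSr v) h) (by simp)
      · exact absurd (m2 h).2 (lt_irrefl _)
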